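/- arXiv:1811.08217 — 2 statements merged into one kernel-verified Lean document; each statement's English description precedes it below -/
import Mathlib

section
/- For all u, v ∈ Z the function x ↦ ρ(x)·(K u)(x)·conj((K v)(x)) is μ-integrable, and whenever (u_j)_{j≥1} converges weakly to u in Z and (v_j)_{j≥1} converges weakly to v in Z, the integrals ∫_X ρ·(K u_j)·conj(K v_j) dμ converge to ∫_X ρ·(K u)·conj(K v) dμ as j → ∞; in particular, the sesquilinear form ρ[u, v] = ∫_X ρ·(K u)·conj(K v) dμ on Z is completely continuous. -/
open scoped InnerProductSpace ENNReal
open MeasureTheory Filter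

private lemma compact_weak_to_strong
    {Z E : Type*} [NormedAddCommGroup Z] [InnerProductSpace ℂ Z] [CompleteSpace Z]
    [NormedAddCommGroup E] [NormedSpace ℂ E]
    (K : Z →L[ℂ] E) (hK : IsCompactOperator K)
    (useq : ℕ → Z) (u : Z)
    (hu : ∀ w : Z, Tendsto (fun j => ⟪useq j, w⟫_ℂ) atTop (nhds ⟪u, w⟫_ℂ)) :
    Tendsto (fun j => K (useq j)) atTop (nhds (K u)) := by
  obtain ⟨C, hC⟩ : ∃ C, ∀ j, ‖useq j‖ ≤ C := by
    obtain ⟨C, hC⟩ := banach_steinhaus (g := fun j => innerSL ℂ (useq j)) (fun x => by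
      have ht : Tendsto (fun j => ‖⟪useq j, x⟫_ℂ‖) atTop (nhds ‖⟪u, x⟫_ℂ‖) := (hu x).norm
      obtain ⟨M, hM⟩ := ht.bddAbove_range
      exact ⟨M, fun j => hM ⟨j, rfl⟩⟩)
    exact ⟨C, fun j => by simpa [innerSL_apply_norm] using hC j⟩
  have hw : ∀ φ : StrongDual ℂ E,
      Tendsto (fun j => φ (K (useq j))) atTop (nhds (φ (K u))) := by
    intro φ
    set w := (InnerProductSpace.toDual ℂ Z).symm (φ.comp K) with hwdef
    have hz : ∀ z : Z, φ (K z) = ⟪w, z⟫_ℂ := by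
      intro z
      have h := (InnerProductSpace.toDual ℂ Z).apply_symm_apply (φ.comp K)
      have : (InnerProductSpace.toDual ℂ Z) w z = φ (K z) := by rw [h]; rfl
      rw [← this]; rfl
    have h2 : Tendsto (fun j => ⟪w, useq j⟫_ℂ) atTop (nhds ⟪w, u⟫_ℂ) := by
      have := (Complex.continuous_conj.tendsto _).comp (hu w)
      simpa [Function.comp_def, inner_conj_symm] using this
    simpa [hz] using h2
  have hbdd : Bornology.IsBounded (Set.range useq) := by
    apply Bornology.IsBounded.subset (Metric.isBounded_closedBall (x := (0:Z)) (r := C))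
    rintro _ ⟨j, rfl⟩
    simpa [Metric.mem_closedBall] using hC j
  have hcomp : IsCompact (closure (⇑K '' Set.range useq)) :=
    IsCompactOperator.isCompact_closure_image_of_bounded (f := (K : Z →ₗ[ℂ] E)) hK hbdd
  apply Filter.tendsto_of_subseq_tendsto
  intro ns hns
  have hmem : ∀ n, K (useq (ns n)) ∈ closure (⇑K '' Set.range useq) := fun n =>
    subset_closure ⟨useq (ns n), ⟨ns n, rfl⟩, rfl⟩
  obtain ⟨a, _, ms, hms, hlim⟩ := hcomp.tendsto_subseq hmem
  refine ⟨ms, ?_⟩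
  have : a = K u := by
    rw [NormedSpace.eq_iff_forall_dual_eq ℂ]
    intro g
    have h1 : Tendsto (fun n => g (K (useq (ns (ms n))))) atTop (nhds (g a)) :=
      (g.continuous.tendsto a).comp hlim
    have h2 : Tendsto (fun n => g (K (useq (ns (ms n))))) atTop (nhds (g (K u))) :=
      (hw g).comp (hns.comp hms.tendsto_atTop)
    exact tendsto_nhds_unique h1 h2
  rwa [← this]

private lemma holder3 {X : Type*} [MeasurableSpace X] {μ : Measure X}
    {B Q R : ℝ≥0∞} (h1 : 1/R = 1/Q + 1/Q) (h2 : (1:ℝ≥0∞)/1 = 1/B + 1/R)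
    [Fact (1 ≤ Q)]
    {ρ : X → ℝ} (hρ : MemLp ρ B μ)
    (f g : Lp ℂ Q μ) :
    Integrable (fun x => (ρ x : ℂ) * (f : X → ℂ) x * (starRingEnd ℂ) ((g : X → ℂ) x)) μ ∧
    ‖∫ x, (ρ x : ℂ) * (f : X → ℂ) x * (starRingEnd ℂ) ((g : X → ℂ) x) ∂μ‖ ≤
      (eLpNorm ρ B μ).toReal * ‖f‖ * ‖g‖ := by
  haveI : ENNReal.HolderTriple Q Q R := ⟨by simpa [one_div] using h1.symm⟩
  haveI : ENNReal.HolderTriple B R 1 := ⟨by simpa [one_div] using h2.symm⟩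
  have hρℂ : MemLp (fun x => ((ρ x : ℝ) : ℂ)) B μ := hρ.ofReal
  have hg' : MemLp (fun x => (starRingEnd ℂ) ((g : X → ℂ) x)) Q μ :=
    ⟨Complex.continuous_conj.comp_aestronglyMeasurable (Lp.aestronglyMeasurable g),
      lt_of_le_of_lt (eLpNorm_mono (fun x => by simp)) (Lp.memLp g).2⟩
  have hfg : MemLp (fun x => (f : X → ℂ) x * (starRingEnd ℂ) ((g : X → ℂ) x)) R μ := by
    have := MemLp.smul (𝕜 := ℂ) (E := ℂ) hg' (Lp.memLp f) (r := R)
    simpa [Pi.smul_apply', smul_eq_mul, Pi.mul_def] using this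
  have h1mem : MemLp (fun x => ((ρ x : ℝ) : ℂ) *
      ((f : X → ℂ) x * (starRingEnd ℂ) ((g : X → ℂ) x))) 1 μ := by
    have := MemLp.smul (𝕜 := ℂ) (E := ℂ) hfg hρℂ (r := 1)
    simpa [Pi.smul_apply', smul_eq_mul, Pi.mul_def] using this
  have hint : Integrable (fun x => (ρ x : ℂ) * (f : X → ℂ) x *
      (starRingEnd ℂ) ((g : X → ℂ) x)) μ := by
    have := memLp_one_iff_integrable.mp h1mem
    simpa [mul_assoc] using this
  refine ⟨hint, ?_⟩
  set H : X → ℂ := fun x => (ρ x : ℂ) * (f : X → ℂ) x * (starRingEnd ℂ) ((g : X → ℂ) x) with hH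
  have step1 : ‖∫ x, H x ∂μ‖ ≤ (eLpNorm H 1 μ).toReal := by
    calc ‖∫ x, H x ∂μ‖ ≤ ∫ x, ‖H x‖ ∂μ := norm_integral_le_integral_norm _
    _ = (eLpNorm H 1 μ).toReal := by
        rw [integral_norm_eq_lintegral_enorm hint.aestronglyMeasurable,
          eLpNorm_one_eq_lintegral_enorm]
  have hρeq : eLpNorm (fun x => ((ρ x : ℝ) : ℂ)) B μ = eLpNorm ρ B μ :=
    le_antisymm (eLpNorm_mono (fun x => by simp)) (eLpNorm_mono (fun x => by simp))
  have hger : eLpNorm (fun x => (starRingEnd ℂ) ((g : X → ℂ) x)) Q μ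
      = eLpNorm (g : X → ℂ) Q μ :=
    le_antisymm (eLpNorm_mono (fun x => by simp)) (eLpNorm_mono (fun x => by simp))
  have step2 : eLpNorm H 1 μ ≤ eLpNorm ρ B μ * (eLpNorm (f : X → ℂ) Q μ *
      eLpNorm (g : X → ℂ) Q μ) := by
    have hb1 : eLpNorm H 1 μ ≤ eLpNorm (fun x => ((ρ x : ℝ) : ℂ)) B μ *
        eLpNorm (fun x => (f : X → ℂ) x * (starRingEnd ℂ) ((g : X → ℂ) x)) R μ := by
      have := eLpNorm_le_eLpNorm_mul_eLpNorm'_of_norm (p := B) (q := R) (r := 1)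
        hρℂ.aestronglyMeasurable hfg.aestronglyMeasurable (fun a b => a * b) 1
        (Filter.Eventually.of_forall (fun x => by simp))
      simpa [hH, mul_assoc] using this
    have hb2 : eLpNorm (fun x => (f : X → ℂ) x * (starRingEnd ℂ) ((g : X → ℂ) x)) R μ ≤
        eLpNorm (f : X → ℂ) Q μ * eLpNorm (fun x => (starRingEnd ℂ) ((g : X → ℂ) x)) Q μ := by
      simpa using eLpNorm_le_eLpNorm_mul_eLpNorm'_of_norm (r := R) (Lp.aestronglyMeasurable f)
        hg'.aestronglyMeasurable (fun a b => a * b) 1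
        (Filter.Eventually.of_forall (fun x => by simp))
    calc eLpNorm H 1 μ ≤ _ := hb1
    _ ≤ eLpNorm (fun x => ((ρ x : ℝ) : ℂ)) B μ * (eLpNorm (f : X → ℂ) Q μ *
        eLpNorm (fun x => (starRingEnd ℂ) ((g : X → ℂ) x)) Q μ) := by
        exact mul_le_mul_right hb2 _
    _ = _ := by rw [hρeq, hger]
  have hfin : eLpNorm ρ B μ * (eLpNorm (f : X → ℂ) Q μ * eLpNorm (g : X → ℂ) Q μ) ≠ ⊤ :=
    ENNReal.mul_ne_top hρ.2.ne (ENNReal.mul_ne_top (Lp.memLp f).2.ne (Lp.memLp g).2.ne)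
  calc ‖∫ x, H x ∂μ‖ ≤ (eLpNorm H 1 μ).toReal := step1
  _ ≤ (eLpNorm ρ B μ * (eLpNorm (f : X → ℂ) Q μ * eLpNorm (g : X → ℂ) Q μ)).toReal :=
      ENNReal.toReal_mono hfin step2
  _ = (eLpNorm ρ B μ).toReal * ‖f‖ * ‖g‖ := by
      rw [ENNReal.toReal_mul, ENNReal.toReal_mul, Lp.norm_def, Lp.norm_def, mul_assoc]

private lemma form_tendsto {X : Type*} [MeasurableSpace X] {μ : Measure X}
    {B Q R : ℝ≥0∞} (h1 : 1/R = 1/Q + 1/Q) (h2 : (1:ℝ≥0∞)/1 = 1/B + 1/R)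
    [Fact (1 ≤ Q)]
    {ρ : X → ℝ} (hρ : MemLp ρ B μ)
    (fj gj : ℕ → Lp ℂ Q μ) (f0 g0 : Lp ℂ Q μ)
    (hf : Tendsto fj atTop (nhds f0)) (hg : Tendsto gj atTop (nhds g0)) :
    Tendsto (fun j => ∫ x, (ρ x : ℂ) * (fj j : X → ℂ) x *
        (starRingEnd ℂ) ((gj j : X → ℂ) x) ∂μ) atTop
      (nhds (∫ x, (ρ x : ℂ) * (f0 : X → ℂ) x * (starRingEnd ℂ) ((g0 : X → ℂ) x) ∂μ)) := by
  set I : Lp ℂ Q μ → Lp ℂ Q μ → ℂ :=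
    fun f g => ∫ x, (ρ x : ℂ) * (f : X → ℂ) x * (starRingEnd ℂ) ((g : X → ℂ) x) ∂μ with hI
  set C : ℝ := (eLpNorm ρ B μ).toReal with hCdef
  have hC0 : 0 ≤ C := ENNReal.toReal_nonneg
  have Ia : ∀ a b c : Lp ℂ Q μ, I (a - b) c = I a c - I b c := by
    intro a b c
    have hab : (((a - b : Lp ℂ Q μ)) : X → ℂ) =ᵐ[μ] (a : X → ℂ) - (b : X → ℂ) :=
      Lp.coeFn_sub a b
    have : I (a - b) c = ∫ x, ((ρ x : ℂ) * (a : X → ℂ) x * (starRingEnd ℂ) ((c : X → ℂ) x)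
        - (ρ x : ℂ) * (b : X → ℂ) x * (starRingEnd ℂ) ((c : X → ℂ) x)) ∂μ := by
      refine integral_congr_ae ?_
      filter_upwards [hab] with x hx
      simp only [hx, Pi.sub_apply]
      ring
    rw [this, integral_sub (holder3 h1 h2 hρ a c).1 (holder3 h1 h2 hρ b c).1]
  have Ib : ∀ a b c : Lp ℂ Q μ, I a (b - c) = I a b - I a c := by
    intro a b c
    have hbc : (((b - c : Lp ℂ Q μ)) : X → ℂ) =ᵐ[μ] (b : X → ℂ) - (c : X → ℂ) :=
      Lp.coeFn_sub b c
    have : I a (b - c) = ∫ x, ((ρ x : ℂ) * (a : X → ℂ) x * (starRingEnd ℂ) ((b : X → ℂ) x)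
        - (ρ x : ℂ) * (a : X → ℂ) x * (starRingEnd ℂ) ((c : X → ℂ) x)) ∂μ := by
      refine integral_congr_ae ?_
      filter_upwards [hbc] with x hx
      simp only [hx, Pi.sub_apply, map_sub]
      ring
    rw [this, integral_sub (holder3 h1 h2 hρ a b).1 (holder3 h1 h2 hρ a c).1]
  have key : ∀ j, I (fj j) (gj j) - I f0 g0 = I (fj j - f0) (gj j) + I f0 (gj j - g0) := by
    intro j
    rw [Ia, Ib]
    ring
  have bound : ∀ j, ‖I (fj j) (gj j) - I f0 g0‖ ≤
      C * ‖fj j - f0‖ * ‖gj j‖ + C * ‖f0‖ * ‖gj j - g0‖ := by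
    intro j
    rw [key j]
    exact (norm_add_le _ _).trans (add_le_add (holder3 h1 h2 hρ (fj j - f0) (gj j)).2
      (holder3 h1 h2 hρ f0 (gj j - g0)).2)
  have hfn : Tendsto (fun j => ‖fj j - f0‖) atTop (nhds 0) :=
    tendsto_iff_norm_sub_tendsto_zero.mp hf
  have hgn : Tendsto (fun j => ‖gj j‖) atTop (nhds ‖g0‖) := hg.norm
  have hgd : Tendsto (fun j => ‖gj j - g0‖) atTop (nhds 0) :=
    tendsto_iff_norm_sub_tendsto_zero.mp hg
  have hrhs : Tendsto (fun j => C * ‖fj j - f0‖ * ‖gj j‖ + C * ‖f0‖ * ‖gj j - g0‖)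
      atTop (nhds 0) := by
    have := ((tendsto_const_nhds (x := C)).mul hfn).mul hgn |>.add
      (((tendsto_const_nhds (x := C)).mul (tendsto_const_nhds (x := ‖f0‖))).mul hgd)
    simpa using this
  have := squeeze_zero_norm bound hrhs
  exact tendsto_sub_nhds_zero_iff.mp this

/-- For a real weight `ρ ∈ L^β` and a compact operator `K` from a Hilbert
space `Z` into `L^q` with `q = 2β/(β-1)`, the form
`ρ[u,v] = ∫ ρ (K u) conj(K v) dμ` is well defined (the integrand is
integrable), and it is completely continuous: it converts weak convergence of
both arguments into convergence of the integrals. -/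
theorem weight_form_completely_continuous
    {X : Type*} [MeasurableSpace X] (μ : Measure X)
    (β : ℝ) (hβ : 1 < β) (q : ℝ) (hq : q = 2 * β / (β - 1))
    (ρ : X → ℝ) (hρ : MemLp ρ (ENNReal.ofReal β) μ)
    [Fact (1 ≤ ENNReal.ofReal q)]
    {Z : Type*} [NormedAddCommGroup Z] [InnerProductSpace ℂ Z] [CompleteSpace Z]
    (K : Z →L[ℂ] Lp ℂ (ENNReal.ofReal q) μ) (hK : IsCompactOperator K) :
    (∀ u v : Z,
      Integrable (fun x => (ρ x : ℂ) * (K u : X → ℂ) x *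
        (starRingEnd ℂ) ((K v : X → ℂ) x)) μ) ∧
    (∀ (useq vseq : ℕ → Z) (u v : Z),
      (∀ w : Z, Filter.Tendsto (fun j => ⟪useq j, w⟫_ℂ) Filter.atTop (nhds ⟪u, w⟫_ℂ)) →
      (∀ w : Z, Filter.Tendsto (fun j => ⟪vseq j, w⟫_ℂ) Filter.atTop (nhds ⟪v, w⟫_ℂ)) →
      Filter.Tendsto
        (fun j => ∫ x, (ρ x : ℂ) * (K (useq j) : X → ℂ) x *
          (starRingEnd ℂ) ((K (vseq j) : X → ℂ) x) ∂μ)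
        Filter.atTop
        (nhds (∫ x, (ρ x : ℂ) * (K u : X → ℂ) x *
          (starRingEnd ℂ) ((K v : X → ℂ) x) ∂μ))) := by
  have hβ0 : (0:ℝ) < β := lt_trans one_pos hβ
  have hβ1 : (0:ℝ) < β - 1 := by linarith
  have hq0 : (0:ℝ) < q := by rw [hq]; positivity
  have hkey : 1/β + 2/q = 1 := by
    rw [hq]; field_simp; ring
  have e : ∀ x : ℝ, 0 < x → 1 / ENNReal.ofReal x = ENNReal.ofReal (1/x) := fun x hx => by
    rw [one_div, one_div, ← ENNReal.ofReal_inv_of_pos hx]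
  have h1 : 1/ENNReal.ofReal (q/2) = 1/ENNReal.ofReal q + 1/ENNReal.ofReal q := by
    rw [e _ (by positivity), e _ hq0, ← ENNReal.ofReal_add (by positivity) (by positivity)]
    congr 1
    rw [one_div (q/2), inv_div]
    ring
  have h2 : (1:ℝ≥0∞)/1 = 1/ENNReal.ofReal β + 1/ENNReal.ofReal (q/2) := by
    rw [e _ hβ0, e _ (by positivity), ← ENNReal.ofReal_add (by positivity) (by positivity),
      show (1:ℝ≥0∞)/1 = ENNReal.ofReal 1 by simp]
    congr 1
    rw [one_div (q/2), inv_div]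
    linarith [hkey]
  constructor
  · intro u v
    exact (holder3 h1 h2 hρ (K u) (K v)).1
  · intro useq vseq u v hu hv
    exact form_tendsto h1 h2 hρ (fun j => K (useq j)) (fun j => K (vseq j)) (K u) (K v)
      (compact_weak_to_strong K hK useq u hu) (compact_weak_to_strong K hK vseq v hv)
end

section
/- The curve σ(t) := (γ(t), cot(α/2)·(1 − ‖γ(t)‖)) ∈ E × ℝ is differentiable at t₀, and with respect to the Euclidean norm on E × ℝ given by ‖(a, s)‖² = ‖a‖² + s², one has ‖σ'(t₀)‖² = r(t₀)² · ‖y'(t₀)‖² + (sin(α/2))⁻² · r'(t₀)²; that is, the pullback under x ↦ (x, cot(α/2)(1 − ‖x‖)) of the Euclidean metric on ℝ^{n+1} takes the conical form csc²(α/2) dr² + r² dy² in polar coordinates. -/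
/-- The pullback of the Euclidean metric on `ℝⁿ × ℝ` under the cone map
`x ↦ (x, cot(α/2)(1 - ‖x‖))` takes the conical form
`csc²(α/2) dr² + r² dy²` in polar coordinates: for a curve `γ` differentiable
at `t₀` with `γ t₀ ≠ 0`, the lifted curve
`σ t = (γ t, cot(α/2)(1 - ‖γ t‖))` (in `ℝⁿ × ℝ` with the Euclidean norm
`‖(a,s)‖² = ‖a‖² + s²`, i.e. the `L²` product norm) is differentiable at `t₀`
and `‖σ'(t₀)‖² = r(t₀)² ‖y'(t₀)‖² + (sin(α/2))⁻² r'(t₀)²`. -/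
theorem cone_metric_polar_form
    (n : ℕ) (hn : 1 ≤ n) (α : ℝ) (hα : α ∈ Set.Ioc 0 Real.pi)
    (γ : ℝ → EuclideanSpace ℝ (Fin n)) (t₀ : ℝ)
    (hγ : DifferentiableAt ℝ γ t₀) (hne : γ t₀ ≠ 0)
    (r : ℝ → ℝ) (y : ℝ → EuclideanSpace ℝ (Fin n))
    (hr : ∀ᶠ t in nhds t₀, r t = ‖γ t‖)
    (hy : ∀ᶠ t in nhds t₀, y t = ‖γ t‖⁻¹ • γ t)
    (σ : ℝ → WithLp 2 (EuclideanSpace ℝ (Fin n) × ℝ))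
    (hσ : ∀ t, σ t = (WithLp.equiv 2 (EuclideanSpace ℝ (Fin n) × ℝ)).symm
      (γ t, Real.cot (α / 2) * (1 - ‖γ t‖))) :
    DifferentiableAt ℝ σ t₀ ∧
    ‖deriv σ t₀‖ ^ 2 = (r t₀) ^ 2 * ‖deriv y t₀‖ ^ 2 +
      ((Real.sin (α / 2))⁻¹) ^ 2 * (deriv r t₀) ^ 2 := by
  have hnorm_ne : ‖γ t₀‖ ≠ 0 := norm_ne_zero_iff.mpr hne
  -- eventually γ t ≠ 0
  have hcont : ContinuousAt γ t₀ := hγ.continuousAt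
  have hev_ne : ∀ᶠ t in nhds t₀, γ t ≠ 0 := hcont.eventually_ne hne
  -- differentiability of r and y
  have hnormdiff : DifferentiableAt ℝ (fun t => ‖γ t‖) t₀ := hγ.norm ℝ hne
  have hrdiff : DifferentiableAt ℝ r t₀ := hnormdiff.congr_of_eventuallyEq hr
  have hydiff : DifferentiableAt ℝ y t₀ :=
    ((hnormdiff.inv hnorm_ne).smul hγ).congr_of_eventuallyEq hy
  set ρ := deriv r t₀ with hρ
  set y' := deriv y t₀ with hy'
  have hryd : HasDerivAt r ρ t₀ := hrdiff.hasDerivAt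
  have hyyd : HasDerivAt y y' t₀ := hydiff.hasDerivAt
  -- values at t₀
  have hrt0 : r t₀ = ‖γ t₀‖ := hr.self_of_nhds
  have hyt0 : y t₀ = ‖γ t₀‖⁻¹ • γ t₀ := hy.self_of_nhds
  have hnormy : ‖y t₀‖ = 1 := by
    rw [hyt0, norm_smul, norm_inv, norm_norm, inv_mul_cancel₀ hnorm_ne]
  -- derivative of t ↦ ‖γ t‖
  have hnormderiv : HasDerivAt (fun t => ‖γ t‖) ρ t₀ :=
    hryd.congr_of_eventuallyEq (hr.mono fun t ht => ht.symm)
  -- γ = r • y eventually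
  have hEq : γ =ᶠ[nhds t₀] fun t => r t • y t := by
    filter_upwards [hr, hy, hev_ne] with t h1 h2 h3
    rw [h1, h2, smul_smul, mul_inv_cancel₀ (norm_ne_zero_iff.mpr h3), one_smul]
  have hgd : HasDerivAt γ (r t₀ • y' + ρ • y t₀) t₀ :=
    (hryd.smul hyyd).congr_of_eventuallyEq hEq
  set g := deriv γ t₀ with hg
  have hgeq : g = ρ • y t₀ + r t₀ • y' :=
    (hγ.hasDerivAt.unique hgd).trans (add_comm _ _)
  -- orthogonality of y and y'
  have horth : inner ℝ (y t₀) y' = (0 : ℝ) := by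
    have hF : HasDerivAt (fun t => (inner ℝ (y t) (y t) : ℝ))
        (inner ℝ (y t₀) y' + inner ℝ y' (y t₀)) t₀ := hyyd.inner ℝ hyyd
    have hFconst : (fun t => (inner ℝ (y t) (y t) : ℝ)) =ᶠ[nhds t₀] fun _ => (1 : ℝ) := by
      filter_upwards [hy, hev_ne] with t h2 h3
      have : ‖y t‖ = 1 := by
        rw [h2, norm_smul, norm_inv, norm_norm,
          inv_mul_cancel₀ (norm_ne_zero_iff.mpr h3)]
      rw [real_inner_self_eq_norm_sq, this]; norm_num
    have h0 : HasDerivAt (fun t => (inner ℝ (y t) (y t) : ℝ)) 0 t₀ :=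
      (hasDerivAt_const t₀ (1 : ℝ)).congr_of_eventuallyEq hFconst
    have := hF.unique h0
    rw [real_inner_comm y' (y t₀)] at this
    rw [real_inner_comm]
    linarith
  -- norm of g
  have hgnorm : ‖g‖ ^ 2 = ρ ^ 2 + (r t₀) ^ 2 * ‖y'‖ ^ 2 := by
    rw [hgeq, norm_add_sq_real, real_inner_smul_left, real_inner_smul_right, horth,
      norm_smul, norm_smul, hnormy, Real.norm_eq_abs, Real.norm_eq_abs]
    have h2 : |r t₀| = r t₀ := by rw [hrt0, abs_norm]
    rw [h2, mul_one, mul_pow, sq_abs]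
    ring
  -- the lifted curve
  set c := Real.cot (α / 2) with hc
  set e := WithLp.prodContinuousLinearEquiv 2 ℝ (EuclideanSpace ℝ (Fin n)) ℝ with he
  have hsnd : HasDerivAt (fun t => c * (1 - ‖γ t‖)) (c * (0 - ρ)) t₀ :=
    ((hasDerivAt_const t₀ (1 : ℝ)).sub hnormderiv).const_mul c
  have hprod : HasDerivAt (fun t => (γ t, c * (1 - ‖γ t‖)))
      (g, c * (0 - ρ)) t₀ := hγ.hasDerivAt.prodMk hsnd
  have hcs : ContinuousSMul ℝ (WithLp 2 (EuclideanSpace ℝ (Fin n) × ℝ)) :=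
    IsBoundedSMul.continuousSMul
  have hσd : HasDerivAt σ (e.symm (g, c * (0 - ρ))) t₀ := by
    have := e.symm.hasFDerivAt.comp_hasDerivAt t₀ hprod
    exact this.congr_of_eventuallyEq
      (Filter.Eventually.of_forall fun t => by rw [hσ t]; rfl)
  refine ⟨hσd.differentiableAt, ?_⟩
  rw [hσd.deriv]
  have hfst : (e.symm (g, c * (0 - ρ))).fst = g := rfl
  have hsnd' : (e.symm (g, c * (0 - ρ))).snd = c * (0 - ρ) := rfl
  rw [WithLp.prod_norm_sq_eq_of_L2, hfst, hsnd', hgnorm]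
  -- trig identity
  have hsinpos : 0 < Real.sin (α / 2) := by
    apply Real.sin_pos_of_pos_of_lt_pi
    · linarith [hα.1]
    · linarith [hα.2, Real.pi_pos]
  have hcsc : ((Real.sin (α / 2))⁻¹) ^ 2 = 1 + c ^ 2 := by
    have hne2 : Real.sin (α / 2) ≠ 0 := hsinpos.ne'
    rw [hc, Real.cot_eq_cos_div_sin]
    field_simp
    rw [Real.sin_sq_add_cos_sq]
  rw [hcsc, Real.norm_eq_abs]
  rw [sq_abs]
  ring
end
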